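/- Let (A,Δ) be an algebraic quantum group, B a non-degenerate algebra, and V ∈ M(A⊙B). Then V = 0 if and only if (ω⊙ι)(V) = 0 for every ω ∈ Â. -/

import Mathlib

open TensorProduct LinearMap

noncomputable section

/-- Slice on the left leg: `sliceL θ (x ⊗ y) = θ x • y`, i.e. `(θ ⊙ ι)`. -/
def sliceL {M N : Type*} [AddCommGroup M] [Module ℂ M] [AddCommGroup N] [Module ℂ N]
    (θ : M →ₗ[ℂ] ℂ) : M ⊗[ℂ] N →ₗ[ℂ] N :=
  TensorProduct.lift (LinearMap.lsmul ℂ N ∘ₗ θ)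

/-- Slice on the right leg: `sliceR θ (x ⊗ y) = θ y • x`, i.e. `(ι ⊙ θ)`. -/
def sliceR {M N : Type*} [AddCommGroup M] [Module ℂ M] [AddCommGroup N] [Module ℂ N]
    (θ : N →ₗ[ℂ] ℂ) : M ⊗[ℂ] N →ₗ[ℂ] M :=
  TensorProduct.lift ((LinearMap.lsmul ℂ M ∘ₗ θ).flip)

/-- An algebraic quantum group: a regular multiplier Hopf algebra `(A, Δ)` with a
(faithful) left invariant functional `φ`.  The comultiplication is encoded through the
canonical bijections `T1 a ⊗ b = Δ(a)(b ⊗ 1)`, `T2 (a ⊗ b) = Δ(a)(1 ⊗ b)`,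
`T3 (a ⊗ b) = (b ⊗ 1)Δ(a)`, `T4 (a ⊗ b) = (1 ⊗ b)Δ(a)` together with the left and right
multiplication operators `ΔL a`/`ΔR a` by `Δ(a)` on `A ⊗ A`. -/
structure AQG (A : Type*) [NonUnitalRing A] [Module ℂ A]
    [SMulCommClass ℂ A A] [IsScalarTower ℂ A A] where
  T1 : A ⊗[ℂ] A ≃ₗ[ℂ] A ⊗[ℂ] A
  T2 : A ⊗[ℂ] A ≃ₗ[ℂ] A ⊗[ℂ] A
  T3 : A ⊗[ℂ] A ≃ₗ[ℂ] A ⊗[ℂ] A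
  T4 : A ⊗[ℂ] A ≃ₗ[ℂ] A ⊗[ℂ] A
  counit : A →ₗ[ℂ] ℂ
  S : A ≃ₗ[ℂ] A
  phi : A →ₗ[ℂ] ℂ
  rho : A ≃ₗ[ℂ] A
  ΔL : A →ₗ[ℂ] (A ⊗[ℂ] A →ₗ[ℂ] A ⊗[ℂ] A)
  ΔR : A →ₗ[ℂ] (A ⊗[ℂ] A →ₗ[ℂ] A ⊗[ℂ] A)
  /- non-degeneracy of the algebra `A` -/
  nondeg_l : ∀ a : A, (∀ b : A, a * b = 0) → a = 0
  nondeg_r : ∀ a : A, (∀ b : A, b * a = 0) → a = 0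
  /- the counit is a non-zero homomorphism with `(ε ⊙ ι)Δ = (ι ⊙ ε)Δ = ι` -/
  counit_mul : ∀ a b : A, counit (a * b) = counit a * counit b
  counit_ne : counit ≠ 0
  counit_T1 : ∀ a b : A, sliceR counit (T1 (a ⊗ₜ b)) = a * b
  counit_T2 : ∀ a b : A, sliceL counit (T2 (a ⊗ₜ b)) = a * b
  counit_T3 : ∀ a b : A, sliceR counit (T3 (a ⊗ₜ b)) = b * a
  counit_T4 : ∀ a b : A, sliceL counit (T4 (a ⊗ₜ b)) = b * a
  /- the antipode -/
  S_mul : ∀ a b : A, S (a * b) = S b * S a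
  antipode_l : ∀ a b : A,
    LinearMap.mul' ℂ A (LinearMap.rTensor A S.toLinearMap (T2 (a ⊗ₜ b))) = counit a • b
  antipode_r : ∀ a b : A,
    LinearMap.mul' ℂ A (LinearMap.lTensor A S.toLinearMap (T3 (a ⊗ₜ b))) = counit a • b
  /- `φ` is a faithful left invariant functional -/
  phi_ne : phi ≠ 0
  phi_faithful_l : ∀ a : A, (∀ b : A, phi (a * b) = 0) → a = 0
  phi_faithful_r : ∀ a : A, (∀ b : A, phi (b * a) = 0) → a = 0
  left_inv_T1 : ∀ a b : A, sliceR phi (T1 (a ⊗ₜ b)) = phi a • b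
  left_inv_T3 : ∀ a b : A, sliceR phi (T3 (a ⊗ₜ b)) = phi a • b
  /- the weak KMS automorphism `ρ`: `φ(ab) = φ(b ρ(a))` -/
  rho_mul : ∀ a b : A, rho (a * b) = rho a * rho b
  phi_kms : ∀ a b : A, phi (a * b) = phi (b * rho a)
  /- `Δ` is a (non-degenerate) homomorphism into `M(A ⊗ A)` -/
  ΔL_mul : ∀ (a b : A) (z : A ⊗[ℂ] A), ΔL (a * b) z = ΔL a (ΔL b z)
  ΔR_mul : ∀ (a b : A) (z : A ⊗[ℂ] A), ΔR (a * b) z = ΔR b (ΔR a z)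
  ΔL_assoc : ∀ (a : A) (z w : A ⊗[ℂ] A), ΔL a (z * w) = ΔL a z * w
  ΔR_assoc : ∀ (a : A) (z w : A ⊗[ℂ] A), ΔR a (z * w) = z * ΔR a w
  ΔLR : ∀ (a : A) (z w : A ⊗[ℂ] A), ΔR a z * w = z * ΔL a w
  ΔL_T1 : ∀ (a b : A) (z : A ⊗[ℂ] A),
    T1 (a ⊗ₜ b) * z = ΔL a (TensorProduct.map (LinearMap.mulLeft ℂ b) LinearMap.id z)
  ΔL_T2 : ∀ (a b : A) (z : A ⊗[ℂ] A),
    T2 (a ⊗ₜ b) * z = ΔL a (TensorProduct.map LinearMap.id (LinearMap.mulLeft ℂ b) z)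
  ΔR_T3 : ∀ (a b : A) (z : A ⊗[ℂ] A),
    z * T3 (a ⊗ₜ b) = ΔR a (TensorProduct.map (LinearMap.mulRight ℂ b) LinearMap.id z)
  ΔR_T4 : ∀ (a b : A) (z : A ⊗[ℂ] A),
    z * T4 (a ⊗ₜ b) = ΔR a (TensorProduct.map LinearMap.id (LinearMap.mulRight ℂ b) z)
  /- coassociativity of `Δ` -/
  coassoc : ∀ a b c : A,
    (TensorProduct.assoc ℂ A A A)
        (LinearMap.rTensor A (T3.toLinearMap ∘ₗ (TensorProduct.mk ℂ A A).flip a)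
          (T2 (c ⊗ₜ b)))
      = LinearMap.lTensor A (T2.toLinearMap ∘ₗ (TensorProduct.mk ℂ A A).flip b)
          (T3 (c ⊗ₜ a))

namespace AQG

variable {A : Type*} [NonUnitalRing A] [Module ℂ A]
  [SMulCommClass ℂ A A] [IsScalarTower ℂ A A] (H : AQG A)

/-- The functional `φa : x ↦ φ(x a)`; the dual algebra is `Â = {φa : a ∈ A}`. -/
def lFun (a : A) : A →ₗ[ℂ] ℂ := H.phi ∘ₗ LinearMap.mulRight ℂ a

/-- The functional `aφ : x ↦ φ(a x)`; also `Â = {aφ : a ∈ A}`. -/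
def rFun (a : A) : A →ₗ[ℂ] ℂ := H.phi ∘ₗ LinearMap.mulLeft ℂ a

/-- The right invariant functional `ψ = φ ∘ S`. -/
def psi : A →ₗ[ℂ] ℂ := H.phi ∘ₗ H.S.toLinearMap

/-- The functional `ψa : x ↦ ψ(x a)`. -/
def lFunPsi (a : A) : A →ₗ[ℂ] ℂ := H.psi ∘ₗ LinearMap.mulRight ℂ a

/-- The right action of `Â` on `A'`: `Ract θ a = θ · (φa)`,
`(θ (φa))(x) = θ((ι ⊙ φa)Δ(x)) = θ((ι ⊙ φ)(Δ(x)(1 ⊗ a)))`. -/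
def Ract (θ : A →ₗ[ℂ] ℂ) (a : A) : A →ₗ[ℂ] ℂ :=
  θ ∘ₗ sliceR H.phi ∘ₗ H.T2.toLinearMap ∘ₗ (TensorProduct.mk ℂ A A).flip a

/-- The left action of `Â` on `A'`: `Lact θ a = (φa) · θ`,
`((φa) θ)(x) = θ((φa ⊙ ι)Δ(x)) = θ((φ ⊙ ι)(Δ(x)(a ⊗ 1)))`. -/
def Lact (θ : A →ₗ[ℂ] ℂ) (a : A) : A →ₗ[ℂ] ℂ :=
  θ ∘ₗ sliceL H.phi ∘ₗ H.T1.toLinearMap ∘ₗ (TensorProduct.mk ℂ A A).flip a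

/-- `c = (ι ⊙ θ)Δ(x)` as an element of `A` (a priori it is only a multiplier). -/
def IsRSlice (θ : A →ₗ[ℂ] ℂ) (x c : A) : Prop :=
  (∀ b : A, c * b = sliceR θ (H.T1 (x ⊗ₜ b))) ∧
  (∀ b : A, b * c = sliceR θ (H.T3 (x ⊗ₜ b)))

/-- `c = (θ ⊙ ι)Δ(x)` as an element of `A`. -/
def IsLSlice (θ : A →ₗ[ℂ] ℂ) (x c : A) : Prop :=
  (∀ b : A, c * b = sliceL θ (H.T2 (x ⊗ₜ b))) ∧
  (∀ b : A, b * c = sliceL θ (H.T4 (x ⊗ₜ b)))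

/-- `θ ∈ M(Â)`: all slices `(θ ⊙ ι)Δ(x)` and `(ι ⊙ θ)Δ(x)` belong to `A`. -/
def HasSlices (θ : A →ₗ[ℂ] ℂ) : Prop :=
  ∀ x : A, (∃ c, H.IsRSlice θ x c) ∧ (∃ c, H.IsLSlice θ x c)

end AQG

end

noncomputable section

/-- A (two-sided) multiplier of a non-degenerate algebra `C`. -/
structure Mult (C : Type*) [NonUnitalRing C] [Module ℂ C]
    [SMulCommClass ℂ C C] [IsScalarTower ℂ C C] where
  L : C →ₗ[ℂ] C
  R : C →ₗ[ℂ] C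
  mid : ∀ x y : C, R x * y = x * L y
  Lmul : ∀ x y : C, L (x * y) = L x * y
  Rmul : ∀ x y : C, R (x * y) = x * R y

/-- `W = V⁻¹` in `M(C)`. -/
def Mult.Inverts {C : Type*} [NonUnitalRing C] [Module ℂ C]
    [SMulCommClass ℂ C C] [IsScalarTower ℂ C C] (V W : Mult C) : Prop :=
  (∀ z, V.L (W.L z) = z) ∧ (∀ z, W.L (V.L z) = z) ∧
  (∀ z, V.R (W.R z) = z) ∧ (∀ z, W.R (V.R z) = z)

namespace AQG

variable {A : Type*} [NonUnitalRing A] [Module ℂ A]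
  [SMulCommClass ℂ A A] [IsScalarTower ℂ A A] (H : AQG A)
variable {B : Type*} [NonUnitalRing B] [Module ℂ B]
  [SMulCommClass ℂ B B] [IsScalarTower ℂ B B]

/-- The left action of `(Δ ⊙ ι)(z)` on `A ⊗ A ⊗ B`, for `z ∈ A ⊗ B`:
`(Δ(a) ⊗ b)·(u ⊗ c) = (Δ(a)u) ⊗ (bc)`. -/
def piDL : A ⊗[ℂ] B →ₗ[ℂ] ((A ⊗[ℂ] A) ⊗[ℂ] B →ₗ[ℂ] (A ⊗[ℂ] A) ⊗[ℂ] B) :=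
  TensorProduct.lift
    (((TensorProduct.mapBilinear (σ₁₂ := RingHom.id ℂ) (M := A ⊗[ℂ] A) (N := B) (M₂ := A ⊗[ℂ] A) (N₂ := B)).comp H.ΔL).compl₂
      (LinearMap.mul ℂ B))

/-- The right action of `(Δ ⊙ ι)(z)` on `A ⊗ A ⊗ B`. -/
def piDR : A ⊗[ℂ] B →ₗ[ℂ] ((A ⊗[ℂ] A) ⊗[ℂ] B →ₗ[ℂ] (A ⊗[ℂ] A) ⊗[ℂ] B) :=
  TensorProduct.lift
    (((TensorProduct.mapBilinear (σ₁₂ := RingHom.id ℂ) (M := A ⊗[ℂ] A) (N := B) (M₂ := A ⊗[ℂ] A) (N₂ := B)).comp H.ΔR).compl₂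
      ((LinearMap.mul ℂ B).flip))

/-- The leg-numbering map `V ↦ V₂₃` for the left action. -/
def leg23 (f : A ⊗[ℂ] B →ₗ[ℂ] A ⊗[ℂ] B) :
    (A ⊗[ℂ] A) ⊗[ℂ] B →ₗ[ℂ] (A ⊗[ℂ] A) ⊗[ℂ] B :=
  (TensorProduct.assoc ℂ A A B).symm.toLinearMap ∘ₗ
    (LinearMap.lTensor A f) ∘ₗ (TensorProduct.assoc ℂ A A B).toLinearMap

/-- The flip of the first two legs of `A ⊗ A ⊗ B`. -/
def swap12 : (A ⊗[ℂ] A) ⊗[ℂ] B ≃ₗ[ℂ] (A ⊗[ℂ] A) ⊗[ℂ] B :=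
  TensorProduct.congr (TensorProduct.comm ℂ A A) (LinearEquiv.refl ℂ B)

/-- The leg-numbering map `V ↦ V₁₃`. -/
def leg13 (f : A ⊗[ℂ] B →ₗ[ℂ] A ⊗[ℂ] B) :
    (A ⊗[ℂ] A) ⊗[ℂ] B →ₗ[ℂ] (A ⊗[ℂ] A) ⊗[ℂ] B :=
  (swap12 (A := A) (B := B)).toLinearMap ∘ₗ leg23 f ∘ₗ
    (swap12 (A := A) (B := B)).toLinearMap

/-- `V ∈ M(A ⊙ B)` is a corepresentation of `(A, Δ)` on `B`:
`(Δ ⊙ ι)(V) = V₁₃ V₂₃` in `M(A ⊙ A ⊙ B)`, expressed on the (spanning) elements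
`(Δ ⊙ ι)(z) w` and `w (Δ ⊙ ι)(z)`. -/
def IsCorep (V : Mult (A ⊗[ℂ] B)) : Prop :=
  (∀ (z : A ⊗[ℂ] B) (w : (A ⊗[ℂ] A) ⊗[ℂ] B),
    H.piDL (V.L z) w = leg13 V.L (leg23 V.L (H.piDL z w))) ∧
  (∀ (z : A ⊗[ℂ] B) (w : (A ⊗[ℂ] A) ⊗[ℂ] B),
    H.piDR (V.R z) w = leg23 V.R (leg13 V.R (H.piDR z w)))

end AQG

end


noncomputable section
namespace AQGaux

variable {A : Type*} [NonUnitalRing A] [Module ℂ A]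
  [SMulCommClass ℂ A A] [IsScalarTower ℂ A A] (H : AQG A)
variable {B : Type*} [NonUnitalRing B] [Module ℂ B]
  [SMulCommClass ℂ B B] [IsScalarTower ℂ B B]

lemma sliceL_tmul {M N : Type*} [AddCommGroup M] [Module ℂ M] [AddCommGroup N] [Module ℂ N]
    (θ : M →ₗ[ℂ] ℂ) (a : M) (x : N) : sliceL θ (a ⊗ₜ x) = θ a • x := by
  simp [sliceL]

/-- separation lemma -/
lemma key (z : A ⊗[ℂ] B) (hz : ∀ p : A, sliceL (H.lFun p) z = 0) : z = 0 := by
  classical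
  set b := Module.Basis.ofVectorSpace ℂ B with hb
  set e : A ⊗[ℂ] B ≃ₗ[ℂ] (Module.Basis.ofVectorSpaceIndex ℂ B →₀ A) :=
    (LinearEquiv.lTensor A b.repr).trans (TensorProduct.finsuppScalarRight ℂ ℂ A _) with he
  have comp : ∀ (f : A →ₗ[ℂ] ℂ) (w : A ⊗[ℂ] B),
      sliceL f w = b.repr.symm ((e w).mapRange f (map_zero f)) := by
    intro f w
    induction w using TensorProduct.induction_on with
    | zero => simp
    | tmul a x =>
        have : (e (a ⊗ₜ x)).mapRange f (map_zero f) = f a • b.repr x := by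
          ext i
          simp [he, TensorProduct.finsuppScalarRight_apply_tmul_apply, mul_comm]
        rw [this, sliceL_tmul]
        simp
    | add u v hu hv => simp [hu, hv, Finsupp.mapRange_add]
  have hcoef : ∀ (p : A) (i), H.lFun p ((e z) i) = 0 := by
    intro p i
    have h0 := hz p
    rw [comp (H.lFun p) z] at h0
    have : ((e z).mapRange (H.lFun p) (map_zero _)) = 0 := by
      have := congrArg b.repr h0
      simpa using this
    simpa using DFunLike.congr_fun this i
  have hez : e z = 0 := by
    ext i
    exact H.phi_faithful_l _ (fun p => hcoef p i)
  have := congrArg e.symm hez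
  simpa using this

/-- multiply slice: `sliceL (lFun p) w * q = sliceL φ (w * (p ⊗ₜ q))` -/
lemma slice_mul (p : A) (q : B) (w : A ⊗[ℂ] B) :
    sliceL (H.lFun p) w * q = sliceL H.phi (w * (p ⊗ₜ q)) := by
  induction w using TensorProduct.induction_on with
  | zero => simp
  | tmul a x =>
      rw [Algebra.TensorProduct.tmul_mul_tmul, sliceL_tmul, sliceL_tmul]
      simp [AQG.lFun, smul_mul_assoc]
  | add u v hu hv => rw [map_add, add_mul, hu, hv, add_mul, map_add]

end AQGaux
end

/-- For `V ∈ M(A ⊙ B)`: `V = 0` iff `(ω ⊙ ι)(V) = 0` for every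
`ω = aφ ∈ Â`, where `(aφ ⊙ ι)(V) x = (φ ⊙ ι)(V(a ⊗ x))`. -/
theorem AQG.slice_separates {A : Type*} [NonUnitalRing A] [Module ℂ A]
    [SMulCommClass ℂ A A] [IsScalarTower ℂ A A] (H : AQG A)
    {B : Type*} [NonUnitalRing B] [Module ℂ B]
    [SMulCommClass ℂ B B] [IsScalarTower ℂ B B]
    (hBl : ∀ b : B, (∀ b' : B, b * b' = 0) → b = 0)
    (hBr : ∀ b : B, (∀ b' : B, b' * b = 0) → b = 0)
    (V : Mult (A ⊗[ℂ] B)) :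
    (V.L = 0 ∧ V.R = 0) ↔
      ∀ (a : A) (x : B), sliceL H.phi (V.L (a ⊗ₜ x)) = 0 := by
  constructor
  · rintro ⟨hL, _⟩ a x
    rw [hL]
    simp
  · intro h
    have hL : V.L = 0 := by
      apply TensorProduct.ext'
      intro a x
      simp only [LinearMap.zero_apply]
      apply AQGaux.key H
      intro p
      apply hBl
      intro q
      rw [AQGaux.slice_mul, ← V.Lmul, Algebra.TensorProduct.tmul_mul_tmul]
      exact h _ _
    refine ⟨hL, ?_⟩
    refine LinearMap.ext fun z => ?_
    rw [LinearMap.zero_apply]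
    apply AQGaux.key H
    intro p
    apply hBl
    intro q
    rw [AQGaux.slice_mul, V.mid, hL]
    simp
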